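/- arXiv:1901.01672 — 2 statements merged into one kernel-verified Lean document; each statement's English description precedes it below -/
import Mathlib

section
/- Let x_1, …, x_m ∈ ℝ^n, let (Z, C) be an initialization with C = 0 whose weight matrices satisfy ‖Z_k‖_2 ≤ s for every 1 ≤ k ≤ d, and let r ≥ 0. Then for the depth-d linear network, the empirical Rademacher sum over the Frobenius ball of radius r around the initialization satisfies E_ξ[ sup_{(W,B) : ‖(W,B)−(Z,C)‖_F ≤ r} Σ_{i=1}^m ξ_i f_{(W,B)}(x_i) ] ≤ d · (s + r + 1)^d · (max_i ‖x_i‖ + 1) · √m, where ξ = (ξ_1, …, ξ_m) is drawn uniformly from {−1, 1}^m. In particular the bound is independent of the width H. -/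
open scoped BigOperators

noncomputable section

/-- Dimension of the `k`-th layer of a depth-`d` network with input dimension `n`
and `H` hidden units per layer: `dim 0 = n`, `dim d = 1`, and `H` in between. -/
def dim (n H d : ℕ) : ℕ → ℕ
  | 0 => n
  | (k + 1) => if k + 1 = d then 1 else H

/-- A parameter configuration of a depth-`d` feed-forward network. -/
structure Params (n H d : ℕ) where
  W : ∀ k : Fin d, Matrix (Fin (dim n H d (k + 1))) (Fin (dim n H d k)) ℝ
  b : ∀ k : Fin d, EuclideanSpace ℝ (Fin (dim n H d (k + 1)))

/-- Squared Frobenius norm of a matrix. -/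
def frobSq {p q : ℕ} (A : Matrix (Fin p) (Fin q) ℝ) : ℝ :=
  ∑ i, ∑ j, (A i j) ^ 2

/-- Frobenius norm of a matrix. -/
def frob {p q : ℕ} (A : Matrix (Fin p) (Fin q) ℝ) : ℝ := Real.sqrt (frobSq A)

/-- Spectral norm: operator norm of the associated map between Euclidean spaces. -/
def spec {p q : ℕ} (A : Matrix (Fin p) (Fin q) ℝ) : ℝ :=
  ‖LinearMap.toContinuousLinearMap (Matrix.toEuclideanLin A)‖

/-- `ℓ2` distance between two parameter configurations. -/
def paramDist {n H d : ℕ} (P Q : Params n H d) : ℝ :=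
  Real.sqrt (∑ k : Fin d, (frobSq (P.W k - Q.W k) + ‖P.b k - Q.b k‖ ^ 2))

/-- Coordinatewise ReLU. -/
def relu {p : ℕ} (v : EuclideanSpace ℝ (Fin p)) : EuclideanSpace ℝ (Fin p) :=
  WithLp.toLp 2 (fun i => max (v i) 0)

/-- Layer outputs of the ReLU network. -/
def layer {n H d : ℕ} (P : Params n H d) (x : EuclideanSpace ℝ (Fin n)) :
    (k : ℕ) → k ≤ d → EuclideanSpace ℝ (Fin (dim n H d k))
  | 0, _ => x
  | (k + 1), hk =>
      Matrix.toEuclideanLin (P.W ⟨k, hk⟩) (relu (layer P x k (Nat.le_of_succ_le hk)))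
        + P.b ⟨k, hk⟩

/-- Layer outputs of the linear network (no activation). -/
def linLayer {n H d : ℕ} (P : Params n H d) (x : EuclideanSpace ℝ (Fin n)) :
    (k : ℕ) → k ≤ d → EuclideanSpace ℝ (Fin (dim n H d k))
  | 0, _ => x
  | (k + 1), hk =>
      Matrix.toEuclideanLin (P.W ⟨k, hk⟩) (linLayer P x k (Nat.le_of_succ_le hk))
        + P.b ⟨k, hk⟩

lemma dim_last {n H d : ℕ} (hd : 0 < d) : dim n H d d = 1 := by
  cases d with
  | zero => omega
  | succ k => simp [dim]

/-- Real-valued output of the ReLU network. -/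
def netOut {n H d : ℕ} (hd : 0 < d) (P : Params n H d) (x : EuclideanSpace ℝ (Fin n)) : ℝ :=
  layer P x d le_rfl ⟨0, by rw [dim_last hd]; omega⟩

/-- Real-valued output of the linear network. -/
def linNetOut {n H d : ℕ} (hd : 0 < d) (P : Params n H d) (x : EuclideanSpace ℝ (Fin n)) : ℝ :=
  linLayer P x d le_rfl ⟨0, by rw [dim_last hd]; omega⟩

/-- Expectation over a Rademacher vector `ξ` drawn uniformly from `{-1,1}^m`. -/
def radExp (m : ℕ) (g : (Fin m → ℝ) → ℝ) : ℝ :=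
  (∑ ε : Fin m → Bool, g (fun i => if ε i then 1 else -1)) / 2 ^ m

def specCLM {p q : ℕ} (A : Matrix (Fin p) (Fin q) ℝ) :
    EuclideanSpace ℝ (Fin q) →L[ℝ] EuclideanSpace ℝ (Fin p) :=
  LinearMap.toContinuousLinearMap (Matrix.toEuclideanLin A)

lemma spec_eq {p q : ℕ} (A : Matrix (Fin p) (Fin q) ℝ) : spec A = ‖specCLM A‖ := rfl

lemma coord_abs_le {p : ℕ} (w : EuclideanSpace ℝ (Fin p)) (i : Fin p) : |w i| ≤ ‖w‖ := by
  rw [EuclideanSpace.norm_eq]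
  have h : |w i| = Real.sqrt (‖w i‖^2) := by
    rw [Real.sqrt_sq_eq_abs]; simp [Real.norm_eq_abs]
  rw [h]
  apply Real.sqrt_le_sqrt
  exact Finset.single_le_sum (f := fun j => ‖w j‖^2) (fun j _ => sq_nonneg _) (Finset.mem_univ i)

lemma specCLM_apply_coord {p q : ℕ} (A : Matrix (Fin p) (Fin q) ℝ)
    (x : EuclideanSpace ℝ (Fin q)) (i : Fin p) :
    specCLM A x i = ∑ j, A i j * x j := by
  simp [specCLM, Matrix.toEuclideanLin_apply, Matrix.mulVec, dotProduct]

lemma spec_le_frob {p q : ℕ} (A : Matrix (Fin p) (Fin q) ℝ) : spec A ≤ frob A := by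
  rw [spec_eq]
  refine ContinuousLinearMap.opNorm_le_bound _ (Real.sqrt_nonneg _) ?_
  intro x
  have hx : ‖x‖ = Real.sqrt (∑ j, (x j)^2) := by
    rw [EuclideanSpace.norm_eq]; simp [Real.norm_eq_abs, sq_abs]
  have hy : ‖specCLM A x‖ = Real.sqrt (∑ i, (specCLM A x i)^2) := by
    rw [EuclideanSpace.norm_eq]; simp [Real.norm_eq_abs, sq_abs]
  rw [hx, hy, frob]
  have hfs : 0 ≤ frobSq A := Finset.sum_nonneg fun i _ => Finset.sum_nonneg fun j _ => sq_nonneg _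
  rw [← Real.sqrt_mul hfs]
  apply Real.sqrt_le_sqrt
  have key : ∀ i, (specCLM A x i)^2 ≤ (∑ j, (A i j)^2) * (∑ j, (x j)^2) := by
    intro i
    rw [specCLM_apply_coord]
    exact Finset.sum_mul_sq_le_sq_mul_sq _ _ _
  calc ∑ i, (specCLM A x i)^2 ≤ ∑ i, (∑ j, (A i j)^2) * (∑ j, (x j)^2) :=
        Finset.sum_le_sum (fun i _ => key i)
    _ = frobSq A * ∑ j, (x j)^2 := by rw [frobSq, Finset.sum_mul]

lemma spec_nonneg {p q : ℕ} (A : Matrix (Fin p) (Fin q) ℝ) : 0 ≤ spec A := norm_nonneg _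

lemma spec_triangle {p q : ℕ} (A B : Matrix (Fin p) (Fin q) ℝ) :
    spec A ≤ spec B + spec (A - B) := by
  have h : specCLM A = specCLM B + specCLM (A - B) := by
    ext x i
    simp [specCLM]
  rw [spec_eq, spec_eq, spec_eq, h]
  exact norm_add_le _ _

def sgn {m : ℕ} (ε : Fin m → Bool) : Fin m → ℝ := fun i => if ε i then 1 else -1

lemma rad_orth {m : ℕ} {i j : Fin m} (hij : i ≠ j) :
    ∑ ε : Fin m → Bool, sgn ε i * sgn ε j = 0 := by
  have hinv : Function.Involutive (fun ε : Fin m → Bool => Function.update ε i (!(ε i))) := by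
    intro ε; funext k
    by_cases hk : k = i
    · subst hk; simp
    · simp [Function.update_of_ne hk]
  set f : (Fin m → Bool) → ℝ := fun ε => sgn ε i * sgn ε j with hf
  set e := Function.Involutive.toPerm _ hinv with he
  have hee : ∀ ε : Fin m → Bool, e ε = Function.update ε i (!(ε i)) := fun _ => rfl
  have hneg : ∀ ε : Fin m → Bool, f (e ε) = -(f ε) := by
    intro ε
    have h1 : sgn (e ε) i = -(sgn ε i) := by
      rw [hee]
      simp only [sgn, Function.update_self]
      cases ε i <;> simp
    have h2 : sgn (e ε) j = sgn ε j := by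
      rw [hee]
      simp only [sgn, Function.update_of_ne (Ne.symm hij)]
    simp only [hf, h1, h2]; ring
  have key : ∑ ε : Fin m → Bool, f ε = -∑ ε : Fin m → Bool, f ε := by
    conv_lhs => rw [← Equiv.sum_comp e f]
    simp_rw [hneg]
    rw [Finset.sum_neg_distrib]
  linarith

lemma sgn_sq {m : ℕ} (ε : Fin m → Bool) (i : Fin m) : sgn ε i * sgn ε i = 1 := by
  simp only [sgn]; cases ε i <;> norm_num

variable {E : Type*} [NormedAddCommGroup E] [InnerProductSpace ℝ E]

lemma rad_sq {m : ℕ} (y : Fin m → E) :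
    ∑ ε : Fin m → Bool, ‖∑ i, sgn ε i • y i‖^2 = 2^m * ∑ i, ‖y i‖^2 := by
  have expand : ∀ ε : Fin m → Bool, ‖∑ i, sgn ε i • y i‖^2
      = ∑ i, ∑ j, sgn ε i * sgn ε j * (inner ℝ (y i) (y j) : ℝ) := by
    intro ε
    rw [← real_inner_self_eq_norm_sq, sum_inner]
    refine Finset.sum_congr rfl fun i _ => ?_
    rw [inner_sum]
    refine Finset.sum_congr rfl fun j _ => ?_
    rw [real_inner_smul_left, real_inner_smul_right]; ring
  simp_rw [expand]
  rw [Finset.sum_comm]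
  have inner_swap : ∀ i : Fin m,
      (∑ ε : Fin m → Bool, ∑ j, sgn ε i * sgn ε j * (inner ℝ (y i) (y j) : ℝ))
        = 2^m * ‖y i‖^2 := by
    intro i
    rw [Finset.sum_comm]
    rw [Finset.sum_eq_single i]
    · simp_rw [sgn_sq, one_mul, Finset.sum_const, real_inner_self_eq_norm_sq]
      simp [Fintype.card_fun, mul_comm]
    · intro j _ hji
      simp_rw [← Finset.sum_mul]
      rw [rad_orth (Ne.symm hji), zero_mul]
    · intro h; exact absurd (Finset.mem_univ i) h
  simp_rw [inner_swap]
  rw [← Finset.mul_sum]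

lemma kh {m : ℕ} (y : Fin m → E) :
    ∑ ε : Fin m → Bool, ‖∑ i, sgn ε i • y i‖ ≤ 2^m * Real.sqrt (∑ i, ‖y i‖^2) := by
  set g : (Fin m → Bool) → ℝ := fun ε => ‖∑ i, sgn ε i • y i‖ with hg
  have h0 : 0 ≤ ∑ ε : Fin m → Bool, g ε := Finset.sum_nonneg fun ε _ => norm_nonneg _
  have hcs := Finset.sum_mul_sq_le_sq_mul_sq Finset.univ (fun _ : Fin m → Bool => (1:ℝ)) g
  simp only [one_mul, one_pow, Finset.sum_const, Finset.card_univ, Fintype.card_fun,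
    Fintype.card_bool, Fintype.card_fin, nsmul_eq_mul, mul_one] at hcs
  have hg2 : ∑ ε : Fin m → Bool, g ε ^ 2 = 2^m * ∑ i, ‖y i‖^2 := rad_sq y
  rw [hg2] at hcs
  push_cast at hcs
  have h2 : (0:ℝ) ≤ 2^m := by positivity
  calc Finset.univ.sum g = Real.sqrt ((Finset.univ.sum g)^2) := (Real.sqrt_sq h0).symm
    _ ≤ Real.sqrt ((2:ℝ)^m * (2^m * ∑ i, ‖y i‖^2)) := Real.sqrt_le_sqrt hcs
    _ = 2^m * Real.sqrt (∑ i, ‖y i‖^2) := by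
        rw [show (2:ℝ)^m * (2^m * ∑ i, ‖y i‖^2) = ((2:ℝ)^m)^2 * ∑ i, ‖y i‖^2 by ring,
          Real.sqrt_mul (sq_nonneg _), Real.sqrt_sq h2]

lemma frobSq_nonneg {p q : ℕ} (A : Matrix (Fin p) (Fin q) ℝ) : 0 ≤ frobSq A :=
  Finset.sum_nonneg fun i _ => Finset.sum_nonneg fun j _ => sq_nonneg _

lemma proj_norm_le {p : ℕ} (i : Fin p) :
    ‖(EuclideanSpace.proj i : EuclideanSpace ℝ (Fin p) →L[ℝ] ℝ)‖ ≤ 1 := by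
  refine ContinuousLinearMap.opNorm_le_bound _ zero_le_one fun w => ?_
  rw [one_mul]
  have : (EuclideanSpace.proj i : EuclideanSpace ℝ (Fin p) →L[ℝ] ℝ) w = w i := rfl
  rw [this, Real.norm_eq_abs]
  exact coord_abs_le w i

lemma lin_decomp {n H d : ℕ} (P : Params n H d) (t : ℝ) (ht : 0 ≤ t)
    (hW : ∀ k, spec (P.W k) ≤ t) (hb : ∀ k, ‖P.b k‖ ≤ t + 1) :
    ∀ (k : ℕ) (hk : k ≤ d),
      ∃ (A : EuclideanSpace ℝ (Fin n) →L[ℝ] EuclideanSpace ℝ (Fin (dim n H d k)))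
        (v : EuclideanSpace ℝ (Fin (dim n H d k))),
        (∀ x, linLayer P x k hk = A x + v) ∧ ‖A‖ ≤ t ^ k ∧ ‖v‖ ≤ k * (t + 1) ^ k := by
  intro k
  induction k with
  | zero =>
    intro hk
    refine ⟨ContinuousLinearMap.id ℝ _, 0, fun x => by simp [linLayer]; rfl, ?_, by simp⟩
    rw [pow_zero]
    exact ContinuousLinearMap.norm_id_le
  | succ k ih =>
    intro hk
    obtain ⟨A, v, hAv, hA, hv⟩ := ih (Nat.le_of_succ_le hk)
    refine ⟨(specCLM (P.W ⟨k, hk⟩)).comp A,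
      specCLM (P.W ⟨k, hk⟩) v + P.b ⟨k, hk⟩, ?_, ?_, ?_⟩
    · intro x
      show Matrix.toEuclideanLin (P.W ⟨k, hk⟩) (linLayer P x k (Nat.le_of_succ_le hk))
          + P.b ⟨k, hk⟩ = _
      rw [hAv x]
      show Matrix.toEuclideanLin (P.W ⟨k, hk⟩) (A x + v) + P.b ⟨k, hk⟩
          = Matrix.toEuclideanLin (P.W ⟨k, hk⟩) (A x)
            + (Matrix.toEuclideanLin (P.W ⟨k, hk⟩) v + P.b ⟨k, hk⟩)
      rw [map_add]
      abel
    · calc ‖(specCLM (P.W ⟨k, hk⟩)).comp A‖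
          ≤ ‖specCLM (P.W ⟨k, hk⟩)‖ * ‖A‖ := ContinuousLinearMap.opNorm_comp_le _ _
        _ ≤ t * t ^ k := mul_le_mul (hW _) hA (norm_nonneg _) ht
        _ = t ^ (k + 1) := by ring
    · have h1 : ‖specCLM (P.W ⟨k, hk⟩) v + P.b ⟨k, hk⟩‖ ≤ t * (k * (t + 1) ^ k) + (t + 1) := by
        calc ‖specCLM (P.W ⟨k, hk⟩) v + P.b ⟨k, hk⟩‖
            ≤ ‖specCLM (P.W ⟨k, hk⟩) v‖ + ‖P.b ⟨k, hk⟩‖ := norm_add_le _ _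
          _ ≤ ‖specCLM (P.W ⟨k, hk⟩)‖ * ‖v‖ + (t + 1) :=
              add_le_add (ContinuousLinearMap.le_opNorm _ _) (hb _)
          _ ≤ t * (k * (t + 1) ^ k) + (t + 1) := by
              refine add_le_add_left ?_ _
              exact mul_le_mul (hW _) hv (norm_nonneg _) ht
      refine h1.trans ?_
      have hpk : (1 : ℝ) ≤ (t + 1) ^ k := by
        have h := pow_le_pow_left₀ zero_le_one (show (1:ℝ) ≤ t + 1 by linarith) k
        rwa [one_pow] at h
      have hk0 : (0 : ℝ) ≤ (k : ℝ) := Nat.cast_nonneg k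
      have hp0 : (0 : ℝ) ≤ (t + 1) ^ k := by positivity
      push_cast
      nlinarith [pow_succ (t + 1) k, mul_nonneg ht (sub_nonneg.2 hpk), mul_nonneg hk0 hp0,
        mul_nonneg (mul_nonneg hk0 hp0) ht]

lemma config_bound {n H d m : ℕ} (hd : 0 < d) (x : Fin m → EuclideanSpace ℝ (Fin n))
    (P : Params n H d) (t : ℝ) (ht : 0 ≤ t)
    (hW : ∀ k, spec (P.W k) ≤ t) (hb : ∀ k, ‖P.b k‖ ≤ t + 1) (ξ : Fin m → ℝ) :
    ∑ i, ξ i * linNetOut hd P (x i)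
      ≤ t ^ d * ‖∑ i, ξ i • x i‖ + d * (t + 1) ^ d * |∑ i, ξ i| := by
  obtain ⟨A, v, hAv, hA, hv⟩ := lin_decomp P t ht hW hb d le_rfl
  set j0 : Fin (dim n H d d) := ⟨0, by rw [dim_last hd]; omega⟩ with hj0
  set L : EuclideanSpace ℝ (Fin n) →L[ℝ] ℝ := (EuclideanSpace.proj j0).comp A with hL
  have hout : ∀ z, linNetOut hd P z = L z + v j0 := by
    intro z
    show linLayer P z d le_rfl j0 = _
    rw [hAv z]
    rfl
  have hsum : ∑ i, ξ i * linNetOut hd P (x i) = L (∑ i, ξ i • x i) + (∑ i, ξ i) * v j0 := by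
    rw [map_sum]
    simp_rw [hout, map_smul, smul_eq_mul, mul_add, Finset.sum_add_distrib, ← Finset.sum_mul]
  rw [hsum]
  have hLnorm : ‖L‖ ≤ t ^ d := by
    calc ‖L‖ ≤ ‖(EuclideanSpace.proj j0 : EuclideanSpace ℝ (Fin (dim n H d d)) →L[ℝ] ℝ)‖ * ‖A‖ :=
          ContinuousLinearMap.opNorm_comp_le _ _
      _ ≤ 1 * (t ^ d) := mul_le_mul (proj_norm_le _) hA (norm_nonneg _) zero_le_one
      _ = t ^ d := one_mul _
  have h1 : L (∑ i, ξ i • x i) ≤ t ^ d * ‖∑ i, ξ i • x i‖ := by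
    calc L (∑ i, ξ i • x i) ≤ |L (∑ i, ξ i • x i)| := le_abs_self _
      _ = ‖L (∑ i, ξ i • x i)‖ := (Real.norm_eq_abs _).symm
      _ ≤ ‖L‖ * ‖∑ i, ξ i • x i‖ := L.le_opNorm _
      _ ≤ t ^ d * ‖∑ i, ξ i • x i‖ := mul_le_mul_of_nonneg_right hLnorm (norm_nonneg _)
  have h2 : (∑ i, ξ i) * v j0 ≤ d * (t + 1) ^ d * |∑ i, ξ i| := by
    calc (∑ i, ξ i) * v j0 ≤ |(∑ i, ξ i) * v j0| := le_abs_self _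
      _ = |∑ i, ξ i| * |v j0| := abs_mul _ _
      _ ≤ |∑ i, ξ i| * ‖v‖ := mul_le_mul_of_nonneg_left (coord_abs_le v j0) (abs_nonneg _)
      _ ≤ |∑ i, ξ i| * (d * (t + 1) ^ d) := mul_le_mul_of_nonneg_left hv (abs_nonneg _)
      _ = d * (t + 1) ^ d * |∑ i, ξ i| := by ring
  linarith

/-- width-independent Rademacher bound for linear networks within
distance `r` of an initialization with spectrally bounded weights. -/
theorem stmt0 {n H d m : ℕ} (hd : 0 < d)
    (x : Fin m → EuclideanSpace ℝ (Fin n))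
    (Z : Params n H d) (hC : ∀ k, Z.b k = 0)
    (s r : ℝ) (hs : ∀ k, spec (Z.W k) ≤ s) (hr : 0 ≤ r) :
    radExp m (fun ξ =>
        ⨆ P : {P : Params n H d // paramDist P Z ≤ r},
          ∑ i, ξ i * linNetOut hd P.1 (x i))
      ≤ d * (s + r + 1) ^ d * ((⨆ i, ‖x i‖) + 1) * Real.sqrt m := by
  set t := s + r with htdef
  have hs0 : 0 ≤ s := le_trans (spec_nonneg (Z.W ⟨0, hd⟩)) (hs ⟨0, hd⟩)
  have ht : 0 ≤ t := by simp only [htdef]; linarith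
  set M := ⨆ i, ‖x i‖ with hM
  have hM0 : 0 ≤ M := Real.iSup_nonneg fun i => norm_nonneg _
  have hxM : ∀ i, ‖x i‖ ≤ M := fun i =>
    le_ciSup (f := fun j => ‖x j‖) (Set.Finite.bddAbove (Set.finite_range _)) i
  have hZball : paramDist Z Z ≤ r := by
    have : paramDist Z Z = 0 := by
      simp [paramDist, frobSq]
    rw [this]; exact hr
  haveI : Nonempty {P : Params n H d // paramDist P Z ≤ r} := ⟨⟨Z, hZball⟩⟩
  -- spectral and bias bounds for configurations in the ball
  have hball : ∀ P : Params n H d, paramDist P Z ≤ r →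
      (∀ k, spec (P.W k) ≤ t) ∧ (∀ k, ‖P.b k‖ ≤ t + 1) := by
    intro P hP
    have hterm : ∀ j : Fin d, 0 ≤ frobSq (P.W j - Z.W j) + ‖P.b j - Z.b j‖ ^ 2 :=
      fun j => add_nonneg (frobSq_nonneg _) (sq_nonneg _)
    constructor
    · intro k
      have hfle : frobSq (P.W k - Z.W k)
          ≤ ∑ j : Fin d, (frobSq (P.W j - Z.W j) + ‖P.b j - Z.b j‖ ^ 2) :=
        le_trans (le_add_of_nonneg_right (sq_nonneg _))
          (Finset.single_le_sum (fun j _ => hterm j) (Finset.mem_univ k))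
      have hfrob : frob (P.W k - Z.W k) ≤ paramDist P Z := Real.sqrt_le_sqrt hfle
      calc spec (P.W k) ≤ spec (Z.W k) + spec (P.W k - Z.W k) := spec_triangle _ _
        _ ≤ s + frob (P.W k - Z.W k) := add_le_add (hs k) (spec_le_frob _)
        _ ≤ s + r := add_le_add_right (hfrob.trans hP) s
    · intro k
      have hble : ‖P.b k - Z.b k‖ ^ 2
          ≤ ∑ j : Fin d, (frobSq (P.W j - Z.W j) + ‖P.b j - Z.b j‖ ^ 2) :=
        le_trans (le_add_of_nonneg_left (frobSq_nonneg _))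
          (Finset.single_le_sum (fun j _ => hterm j) (Finset.mem_univ k))
      have h2 := Real.sqrt_le_sqrt hble
      rw [Real.sqrt_sq (norm_nonneg _)] at h2
      have : ‖P.b k‖ ≤ r := by
        have hZb : Z.b k = 0 := hC k
        rw [hZb, sub_zero] at h2
        exact h2.trans hP
      simp only [htdef]; linarith
  -- per-sign-vector bound on the supremum
  have hξ : ∀ ε : Fin m → Bool,
      (⨆ P : {P : Params n H d // paramDist P Z ≤ r},
          ∑ i, sgn ε i * linNetOut hd P.1 (x i))
        ≤ t ^ d * ‖∑ i, sgn ε i • x i‖ + d * (t + 1) ^ d * |∑ i, sgn ε i| := by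
    intro ε
    refine ciSup_le fun P => ?_
    obtain ⟨h1, h2⟩ := hball P.1 P.2
    exact config_bound hd x P.1 t ht h1 h2 (sgn ε)
  have h2m : (0:ℝ) < 2 ^ m := by positivity
  have hsqm : (0:ℝ) ≤ Real.sqrt m := Real.sqrt_nonneg _
  -- Khintchine bounds for the two Rademacher averages
  have kh1 : ∑ ε : Fin m → Bool, ‖∑ i, sgn ε i • x i‖ ≤ 2 ^ m * (M * Real.sqrt m) := by
    refine (kh x).trans ?_
    have hsum : ∑ i, ‖x i‖ ^ 2 ≤ (m : ℝ) * M ^ 2 := by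
      calc ∑ i, ‖x i‖ ^ 2 ≤ ∑ _i : Fin m, M ^ 2 :=
            Finset.sum_le_sum fun i _ => pow_le_pow_left₀ (norm_nonneg _) (hxM i) 2
        _ = (m : ℝ) * M ^ 2 := by simp [mul_comm]
    have := Real.sqrt_le_sqrt hsum
    rw [Real.sqrt_mul (Nat.cast_nonneg m), Real.sqrt_sq hM0] at this
    rw [mul_comm (Real.sqrt m) M] at this
    exact mul_le_mul_of_nonneg_left this h2m.le
  have kh2 : ∑ ε : Fin m → Bool, |∑ i, sgn ε i| ≤ 2 ^ m * Real.sqrt m := by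
    have h := kh (fun _ : Fin m => (1 : ℝ))
    simp only [smul_eq_mul, mul_one, Real.norm_eq_abs, norm_one, one_pow,
      Finset.sum_const, Finset.card_univ, Fintype.card_fin, nsmul_eq_mul] at h
    exact h
  -- core arithmetic inequality
  have hd1 : (1 : ℝ) ≤ (d : ℝ) := by exact_mod_cast hd
  have hp : t ^ d ≤ (t + 1) ^ d := pow_le_pow_left₀ ht (by linarith) d
  have hpnn : (0 : ℝ) ≤ (t + 1) ^ d := by positivity
  have core : t ^ d * M + d * (t + 1) ^ d ≤ d * (t + 1) ^ d * (M + 1) := by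
    have h5 : t ^ d * M ≤ ((d : ℝ) * (t + 1) ^ d) * M :=
      mul_le_mul_of_nonneg_right (hp.trans (le_mul_of_one_le_left hpnn hd1)) hM0
    nlinarith
  -- put everything together
  calc radExp m (fun ξ =>
        ⨆ P : {P : Params n H d // paramDist P Z ≤ r},
          ∑ i, ξ i * linNetOut hd P.1 (x i))
      = (∑ ε : Fin m → Bool,
          ⨆ P : {P : Params n H d // paramDist P Z ≤ r},
            ∑ i, sgn ε i * linNetOut hd P.1 (x i)) / 2 ^ m := rfl
    _ ≤ (∑ ε : Fin m → Bool,
          (t ^ d * ‖∑ i, sgn ε i • x i‖ + d * (t + 1) ^ d * |∑ i, sgn ε i|)) / 2 ^ m := by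
        apply div_le_div_of_nonneg_right ?_ h2m.le
        exact Finset.sum_le_sum fun ε _ => hξ ε
    _ = (t ^ d * (∑ ε : Fin m → Bool, ‖∑ i, sgn ε i • x i‖)
          + d * (t + 1) ^ d * (∑ ε : Fin m → Bool, |∑ i, sgn ε i|)) / 2 ^ m := by
        rw [Finset.sum_add_distrib, ← Finset.mul_sum, ← Finset.mul_sum]
    _ ≤ (t ^ d * (2 ^ m * (M * Real.sqrt m))
          + d * (t + 1) ^ d * (2 ^ m * Real.sqrt m)) / 2 ^ m := by
        apply div_le_div_of_nonneg_right ?_ h2m.le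
        refine add_le_add ?_ ?_
        · exact mul_le_mul_of_nonneg_left kh1 (by positivity)
        · exact mul_le_mul_of_nonneg_left kh2 (by positivity)
    _ = (t ^ d * M + d * (t + 1) ^ d) * Real.sqrt m := by
        field_simp
    _ ≤ (d * (t + 1) ^ d * (M + 1)) * Real.sqrt m :=
        mul_le_mul_of_nonneg_right core hsqm
    _ = d * (t + 1) ^ d * (M + 1) * Real.sqrt m := rfl
end
end

section
/- Let d ≥ 3, H ≥ 1, n ≥ 1, and let Z_1 ∈ ℝ^{H×n}, Z_k ∈ ℝ^{H×H} for 1 < k < d, and Z_d ∈ ℝ^{1×H} be random matrices all of whose entries are independent Gaussian N(0, 1/H) random variables (Xavier initialization). Then for every t ∈ (0, 1), with probability at least 1 − 2d e^{−H t² / 8}, the product of squared Frobenius norms satisfies ∏_{k=1}^d ‖Z_k‖_F² ≥ (1 − t)^d · n · H^{d−2}. In particular, the ℓ2-norm measure ∏_{k=1}^d ‖Z_k‖_F² of the untrained network grows with the width H as Ω(H^{d−2}). -/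
open scoped BigOperators
open scoped NNReal ENNReal

noncomputable section

open MeasureTheory ProbabilityTheory in
lemma xavier_gauss_int (v : ℝ≥0) (hv : v ≠ 0) (l : ℝ) (hl : 0 < l) :
    ∫ x, Real.exp (-(l * x^2)) ∂(gaussianReal 0 v) = (Real.sqrt (1 + 2*l*v))⁻¹ := by
  have hv0 : (0:ℝ) < (v:ℝ) := by positivity
  rw [gaussianReal_of_var_ne_zero _ hv]
  have hpdf : gaussianPDF 0 v = fun x => ((Real.toNNReal (gaussianPDFReal 0 v x) : ℝ≥0) : ℝ≥0∞) := by
    ext x; rfl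
  rw [hpdf, integral_withDensity_eq_integral_smul]
  swap
  · exact (measurable_gaussianPDFReal 0 v).real_toNNReal
  have hb : (0:ℝ) < l + 1/(2*v) := by positivity
  have key : ∀ x : ℝ, (Real.toNNReal (gaussianPDFReal 0 v x) : ℝ≥0) • Real.exp (-(l * x^2))
      = (Real.sqrt (2*Real.pi*v))⁻¹ * Real.exp (-(l + 1/(2*v)) * x^2) := by
    intro x
    simp only [NNReal.smul_def, smul_eq_mul,
      Real.coe_toNNReal _ (gaussianPDFReal_nonneg _ _ _)]
    simp only [gaussianPDFReal, sub_zero]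
    rw [mul_assoc, ← Real.exp_add]
    congr 2
    field_simp
    ring
  calc ∫ x, (Real.toNNReal (gaussianPDFReal 0 v x) : ℝ≥0) • Real.exp (-(l * x^2))
      = ∫ x, (Real.sqrt (2*Real.pi*v))⁻¹ * Real.exp (-(l + 1/(2*v)) * x^2) := by
        refine integral_congr_ae (Filter.Eventually.of_forall fun x => ?_)
        exact key x
    _ = (Real.sqrt (2*Real.pi*v))⁻¹ * ∫ x, Real.exp (-(l + 1/(2*v)) * x^2) := by
        rw [integral_const_mul]
    _ = (Real.sqrt (2*Real.pi*v))⁻¹ * Real.sqrt (Real.pi / (l + 1/(2*v))) := by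
        rw [integral_gaussian]
    _ = (Real.sqrt (1 + 2*l*v))⁻¹ := by
        rw [← Real.sqrt_inv, ← Real.sqrt_mul (by positivity)]
        congr 1
        field_simp
        ring
        rw [← Real.sqrt_mul (by positivity), inv_mul_cancel₀ (by positivity), Real.sqrt_one]

open MeasureTheory ProbabilityTheory in
lemma xavier_iIndepFun_congr_ae {Ω ι : Type*} [MeasurableSpace Ω] {μ : Measure Ω}
    {β : ι → Type*} [m : ∀ i, MeasurableSpace (β i)] {f g : ∀ i, Ω → β i}
    (h : iIndepFun f μ) (h' : ∀ i, f i =ᵐ[μ] g i) : iIndepFun g μ := by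
  rw [iIndepFun_iff_measure_inter_preimage_eq_mul] at h ⊢
  intro S sets H
  have hae : ∀ᵐ ω ∂μ, ∀ i ∈ S, f i ω = g i ω :=
    (MeasureTheory.ae_ball_iff S.countable_toSet).2 fun i _ => h' i
  have h1 : ((⋂ i ∈ S, f i ⁻¹' sets i) : Set Ω) =ᵐ[μ] (⋂ i ∈ S, g i ⁻¹' sets i) := by
    refine hae.mono fun ω hω => ?_
    refine eq_iff_iff.2 ?_
    show ω ∈ (⋂ i ∈ S, f i ⁻¹' sets i) ↔ ω ∈ (⋂ i ∈ S, g i ⁻¹' sets i)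
    simp only [Set.mem_iInter, Set.mem_preimage]
    exact ⟨fun hall i hi => (hω i hi) ▸ hall i hi, fun hall i hi => (hω i hi).symm ▸ hall i hi⟩
  have h2 : ∀ i ∈ S, μ (f i ⁻¹' sets i) = μ (g i ⁻¹' sets i) := by
    intro i hi
    refine measure_congr ((h' i).mono fun ω hω => ?_)
    refine eq_iff_iff.2 ?_
    show ω ∈ f i ⁻¹' sets i ↔ ω ∈ g i ⁻¹' sets i
    simp [Set.mem_preimage, hω]
  rw [← measure_congr h1, h S H]
  exact Finset.prod_congr rfl h2

lemma xavier_key_ineq {t : ℝ} (ht0 : 0 < t) (ht1 : t < 1) :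
    Real.exp (t/2) * Real.sqrt (1 - t) ≤ Real.exp (-(t^2)/8) := by
  have h1t : (0:ℝ) < 1 - t := by linarith
  have hsq : (Real.exp (t/2) * Real.sqrt (1 - t))^2 ≤ (Real.exp (-(t^2)/8))^2 := by
    rw [mul_pow, ← Real.exp_nat_mul, ← Real.exp_nat_mul, Real.sq_sqrt h1t.le]
    push_cast
    rw [show (2:ℝ) * (t/2) = t by ring, show (2:ℝ) * (-(t^2)/8) = -(t^2)/4 by ring]
    have hA : (1 - t/2)^2 ≤ Real.exp (-t) := by
      rw [show Real.exp (-t) = Real.exp (-(t/2))^2 by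
        rw [← Real.exp_nat_mul]; push_cast; ring_nf]
      have := Real.add_one_le_exp (-(t/2))
      have h0 : (0:ℝ) ≤ 1 - t/2 := by linarith
      nlinarith
    have h4 : (0:ℝ) < 1 - t^2/4 := by nlinarith
    have hB : Real.exp (t^2/4) ≤ (1 - t^2/4)⁻¹ := by
      rw [le_inv_comm₀ (Real.exp_pos _) h4]
      calc (1 - t^2/4) ≤ Real.exp (-(t^2/4)) := by
            have := Real.add_one_le_exp (-(t^2/4)); linarith
        _ = (Real.exp (t^2/4))⁻¹ := by rw [Real.exp_neg]
    have hD : (1 - t) * Real.exp (t^2/4) ≤ Real.exp (-t) := by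
      calc (1 - t) * Real.exp (t^2/4) ≤ (1 - t) * (1 - t^2/4)⁻¹ :=
            mul_le_mul_of_nonneg_left hB h1t.le
        _ ≤ (1 - t/2)^2 := by
            rw [← div_eq_mul_inv, div_le_iff₀ h4]
            have hc : (0:ℝ) ≤ t^3*(4-t) := mul_nonneg (by positivity) (by linarith)
            nlinarith [hc]
        _ ≤ Real.exp (-t) := hA
    have hE : 1 - t ≤ Real.exp (-t - t^2/4) := by
      have h' := mul_le_mul_of_nonneg_right hD (Real.exp_pos (-(t^2/4))).le
      rw [mul_assoc, ← Real.exp_add] at h'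
      simp only [add_neg_cancel, Real.exp_zero, mul_one] at h'
      rw [← Real.exp_add] at h'
      rw [show -t - t^2/4 = -t + -(t^2/4) by ring]
      exact h'
    calc Real.exp t * (1 - t) ≤ Real.exp t * Real.exp (-t - t^2/4) :=
          mul_le_mul_of_nonneg_left hE (Real.exp_pos _).le
      _ = Real.exp (-(t^2)/4) := by rw [← Real.exp_add]; ring_nf
  exact le_of_pow_le_pow_left₀ two_ne_zero (Real.exp_pos _).le hsq

lemma xavier_dim_prod1 {n H d : ℕ} (hd : 3 ≤ d) (hn : 1 ≤ n) :
    ∏ k ∈ Finset.range d, dim n H d k = n * H^(d-1) := by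
  rw [Finset.range_eq_Ico, Finset.prod_eq_prod_Ico_succ_bot (by omega)]
  have h1 : ∀ j ∈ Finset.Ico 1 d, dim n H d j = H := by
    intro j hj
    simp only [Finset.mem_Ico] at hj
    obtain ⟨j', rfl⟩ := Nat.exists_eq_succ_of_ne_zero (by omega : j ≠ 0)
    simp only [dim]
    rw [if_neg (by omega)]
  rw [Finset.prod_congr rfl h1, Finset.prod_const, Nat.card_Ico]
  rfl

lemma xavier_dim_prod2 {n H d : ℕ} (hd : 3 ≤ d) :
    ∏ k ∈ Finset.range d, dim n H d (k+1) = H^(d-1) := by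
  obtain ⟨e, rfl⟩ : ∃ e, d = e + 1 := ⟨d - 1, by omega⟩
  rw [Finset.prod_range_succ]
  have h1 : ∀ j ∈ Finset.range e, dim n H (e+1) (j+1) = H := by
    intro j hj
    simp only [Finset.mem_range] at hj
    simp only [dim]
    rw [if_neg (by omega)]
  rw [Finset.prod_congr rfl h1, Finset.prod_const]
  simp [dim]

lemma xavier_one_le_dim {n H d : ℕ} (hH : 1 ≤ H) (hn : 1 ≤ n) (j : ℕ) :
    1 ≤ dim n H d j := by
  cases j with
  | zero => exact hn
  | succ j => simp only [dim]; split <;> omega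

lemma xavier_H_le_dim_mul {n H d : ℕ} (hd : 3 ≤ d) (hH : 1 ≤ H) (hn : 1 ≤ n) (k : Fin d) :
    H ≤ dim n H d ((k:ℕ)+1) * dim n H d (k:ℕ) := by
  have hk := k.2
  by_cases hkd : (k:ℕ)+1 = d
  · obtain ⟨j, hj⟩ := Nat.exists_eq_succ_of_ne_zero (by omega : (k:ℕ) ≠ 0)
    have h2 : dim n H d (j+1) = H := by simp only [dim]; rw [if_neg (by omega)]
    have h3 : dim n H d ((k:ℕ)+1) = 1 := by simp only [dim]; rw [if_pos hkd]
    rw [h3, hj, h2]; omega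
  · have h2 : dim n H d ((k:ℕ)+1) = H := by simp only [dim]; rw [if_neg hkd]
    rw [h2]
    calc H = H * 1 := by omega
      _ ≤ _ := Nat.mul_le_mul_left H (xavier_one_le_dim hH hn _)

open MeasureTheory ProbabilityTheory in
/-- for Xavier-initialized weights, the product of squared Frobenius
norms is at least `(1-t)^d * n * H^(d-2)` with probability `1 - 2d e^{-Ht²/8}`. -/
theorem stmt4 {Ω : Type*} [MeasurableSpace Ω] (μ : Measure Ω) [IsProbabilityMeasure μ]
    {n H d : ℕ} (hd : 3 ≤ d) (hH : 1 ≤ H) (hn : 1 ≤ n)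
    (Z : Ω → Params n H d)
    (hindep : iIndepFun
      (fun (e : Σ k : Fin d, Fin (dim n H d ((k : ℕ) + 1)) × Fin (dim n H d k)) =>
        fun ω => (Z ω).W e.1 e.2.1 e.2.2) μ)
    (hgauss : ∀ (k : Fin d) i j,
      Measure.map (fun ω => (Z ω).W k i j) μ = gaussianReal 0 ((H : NNReal)⁻¹))
    (t : ℝ) (ht0 : 0 < t) (ht1 : t < 1) :
    ENNReal.ofReal (1 - 2 * d * Real.exp (-((H : ℝ) * t ^ 2) / 8))
      ≤ μ {ω | (1 - t) ^ d * n * (H : ℝ) ^ (d - 2) ≤ ∏ k, frobSq ((Z ω).W k)} := by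
  classical
  set v : ℝ≥0 := (H : ℝ≥0)⁻¹ with hv_def
  have hH0 : (0:ℝ) < H := by exact_mod_cast hH
  have hHne : (H : ℝ≥0) ≠ 0 := by
    simp only [ne_eq, Nat.cast_eq_zero]
    omega
  have hv : v ≠ 0 := by simp [hv_def, hHne]
  have hvr : (v:ℝ) = (H:ℝ)⁻¹ := by rw [hv_def]; push_cast; rfl
  have h1t : (0:ℝ) < 1 - t := by linarith
  -- entries
  set X : (Σ k : Fin d, Fin (dim n H d ((k:ℕ) + 1)) × Fin (dim n H d (k:ℕ))) → Ω → ℝ :=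
    fun e ω => (Z ω).W e.1 e.2.1 e.2.2 with hX_def
  have hgauss' : ∀ e, Measure.map (X e) μ = gaussianReal 0 v := fun e => hgauss e.1 e.2.1 e.2.2
  have hXae : ∀ e, AEMeasurable (X e) μ := by
    intro e
    by_contra hc
    have h0 := Measure.map_of_not_aemeasurable hc
    rw [hgauss' e] at h0
    exact (IsProbabilityMeasure.ne_zero (gaussianReal 0 v)) h0
  set Y : (Σ k : Fin d, Fin (dim n H d ((k:ℕ) + 1)) × Fin (dim n H d (k:ℕ))) → Ω → ℝ :=
    fun e => (hXae e).mk _ with hY_def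
  have hYm : ∀ e, Measurable (Y e) := fun e => (hXae e).measurable_mk
  have hYeq : ∀ e, X e =ᵐ[μ] Y e := fun e => (hXae e).ae_eq_mk
  have hmapY : ∀ e, Measure.map (Y e) μ = gaussianReal 0 v := fun e => by
    rw [← Measure.map_congr (hYeq e), hgauss' e]
  have hindepY : iIndepFun Y μ := xavier_iIndepFun_congr_ae hindep hYeq
  set Q : (Σ k : Fin d, Fin (dim n H d ((k:ℕ) + 1)) × Fin (dim n H d (k:ℕ))) → Ω → ℝ :=
    fun e ω => (Y e ω)^2 with hQ_def
  have hQm : ∀ e, Measurable (Q e) := fun e => (hYm e).pow_const 2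
  have hindepQ : iIndepFun Q μ :=
    hindepY.comp (fun _ => fun x : ℝ => x^2) (fun _ => measurable_id.pow_const 2)
  -- Chernoff parameter
  set l : ℝ := t * H / (2 * (1 - t)) with hl_def
  have hl : 0 < l := by apply div_pos <;> positivity
  -- per-entry mgf
  have hmgf : ∀ e, mgf (Q e) μ (-l) = Real.sqrt (1 - t) := by
    intro e
    have hstep : mgf (Q e) μ (-l) = ∫ x, Real.exp (-(l * x^2)) ∂(gaussianReal 0 v) := by
      rw [← hmapY e, integral_map (hYm e).aemeasurable]
      · simp only [mgf, hQ_def, neg_mul]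
      · exact (Real.measurable_exp.comp ((measurable_id.pow_const 2).const_mul l).neg).aestronglyMeasurable
    rw [hstep, xavier_gauss_int v hv l hl]
    have hval : 1 + 2*l*(v:ℝ) = (1-t)⁻¹ := by
      rw [hl_def, hvr]
      field_simp
      ring
    rw [hval, ← Real.sqrt_inv, inv_inv]
  -- per-layer setup
  set emb : ∀ k : Fin d, (Fin (dim n H d ((k:ℕ) + 1)) × Fin (dim n H d (k:ℕ))) ↪
      (Σ k : Fin d, Fin (dim n H d ((k:ℕ) + 1)) × Fin (dim n H d (k:ℕ))) :=
    fun k => ⟨fun p => ⟨k, p⟩, fun p q h => by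
      simpa using h⟩ with hemb_def
  set s : ∀ k : Fin d, Finset (Σ k : Fin d, Fin (dim n H d ((k:ℕ) + 1)) × Fin (dim n H d (k:ℕ))) :=
    fun k => Finset.univ.map (emb k) with hs_def
  set m : Fin d → ℕ := fun k => dim n H d ((k:ℕ)+1) * dim n H d (k:ℕ) with hm_def
  have hcard : ∀ k, (s k).card = m k := by
    intro k
    rw [hs_def, Finset.card_map, Finset.card_univ, Fintype.card_prod, Fintype.card_fin,
      Fintype.card_fin]
  have hHm : ∀ k, H ≤ m k := fun k => xavier_H_le_dim_mul hd hH hn k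
  set ε : Fin d → ℝ := fun k => (1-t) * (m k : ℝ) / H with hε_def
  have hε0 : ∀ k, 0 ≤ ε k := fun k => by rw [hε_def]; positivity
  -- frobSq pointwise as sum over s k
  have hfrob : ∀ (k : Fin d) (ω : Ω), frobSq ((Z ω).W k) = ∑ e ∈ s k, (X e ω)^2 := by
    intro k ω
    rw [hs_def, Finset.sum_map]
    simp only [hemb_def, Function.Embedding.coeFn_mk, hX_def]
    rw [Fintype.sum_prod_type]
    rfl
  -- a.e. equality with Q-sums
  have haeX : ∀ᵐ ω ∂μ, ∀ e, X e ω = Y e ω := ae_all_iff.2 hYeq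
  have haefrob : ∀ k : Fin d,
      (fun ω => frobSq ((Z ω).W k)) =ᵐ[μ] (fun ω => ∑ e ∈ s k, Q e ω) := by
    intro k
    refine haeX.mono fun ω hω => ?_
    show frobSq ((Z ω).W k) = ∑ e ∈ s k, Q e ω
    rw [hfrob k ω]
    exact Finset.sum_congr rfl fun e _ => by rw [hω e]
  -- the bound B
  set B : ℝ := Real.exp (-((H:ℝ) * t^2) / 8) with hB_def
  have hB0 : 0 ≤ B := (Real.exp_pos _).le
  -- Chernoff per layer
  have hbad : ∀ k : Fin d, μ {ω | frobSq ((Z ω).W k) < ε k} ≤ ENNReal.ofReal B := by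
    intro k
    have hsub : {ω | frobSq ((Z ω).W k) < ε k} ⊆ {ω | frobSq ((Z ω).W k) ≤ ε k} :=
      Set.setOf_subset_setOf.2 fun ω hω => le_of_lt hω
    have hcongr : μ {ω | frobSq ((Z ω).W k) ≤ ε k} = μ {ω | (∑ e ∈ s k, Q e) ω ≤ ε k} := by
      refine measure_congr ((haefrob k).mono fun ω hω => ?_)
      have hω' : frobSq ((Z ω).W k) = ∑ e ∈ s k, Q e ω := hω
      refine eq_iff_iff.2 ?_
      show ω ∈ {ω | frobSq ((Z ω).W k) ≤ ε k} ↔ ω ∈ {ω | (∑ e ∈ s k, Q e) ω ≤ ε k}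
      simp only [Set.mem_setOf_eq, Finset.sum_apply]
      rw [hω']
    refine le_trans (measure_mono hsub) ?_
    rw [hcongr]
    -- Chernoff
    have hsumfn : (∑ e ∈ s k, Q e) = fun ω => ∑ e ∈ s k, Q e ω := by
      ext ω; simp [Finset.sum_apply]
    have hTm : Measurable (∑ e ∈ s k, Q e) := by
      rw [hsumfn]; exact Finset.measurable_sum _ (fun e _ => hQm e)
    have hint : Integrable (fun ω => Real.exp ((-l) * (∑ e ∈ s k, Q e) ω)) μ := by
      refine Integrable.mono' (integrable_const (1:ℝ)) ?_ ?_
      · exact (Real.measurable_exp.comp (hTm.const_mul (-l))).aestronglyMeasurable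
      · refine Filter.Eventually.of_forall fun ω => ?_
        rw [Real.norm_eq_abs, abs_of_pos (Real.exp_pos _), Real.exp_le_one_iff]
        have hsum0 : 0 ≤ (∑ e ∈ s k, Q e) ω := by
          rw [Finset.sum_apply]
          exact Finset.sum_nonneg fun e _ => sq_nonneg _
        nlinarith
    have hch := measure_le_le_exp_mul_mgf (μ := μ) (X := ∑ e ∈ s k, Q e) (ε k)
      (neg_nonpos.2 hl.le) hint
    have hmgfsum : mgf (∑ e ∈ s k, Q e) μ (-l) = (Real.sqrt (1-t)) ^ (m k) := by
      rw [hindepQ.mgf_sum hQm (s k)]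
      rw [Finset.prod_congr rfl (fun e _ => hmgf e), Finset.prod_const, hcard]
    have hexp : Real.exp (-(-l) * ε k) = Real.exp (t/2) ^ (m k) := by
      rw [← Real.exp_nat_mul]
      congr 1
      rw [hε_def, hl_def]
      field_simp
    rw [hmgfsum, hexp] at hch
    rw [← mul_pow] at hch
    have hcB : (Real.exp (t/2) * Real.sqrt (1-t)) ^ (m k) ≤ B := by
      have hc0 : 0 ≤ Real.exp (t/2) * Real.sqrt (1-t) := by positivity
      have h1 : (Real.exp (t/2) * Real.sqrt (1-t)) ^ (m k) ≤ (Real.exp (-(t^2)/8)) ^ (m k) :=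
        pow_le_pow_left₀ hc0 (xavier_key_ineq ht0 ht1) _
      have h2 : (Real.exp (-(t^2)/8)) ^ (m k) ≤ (Real.exp (-(t^2)/8)) ^ H := by
        refine pow_le_pow_of_le_one (Real.exp_pos _).le ?_ (hHm k)
        rw [Real.exp_le_one_iff]
        nlinarith
      have h3 : (Real.exp (-(t^2)/8)) ^ H = B := by
        rw [← Real.exp_nat_mul, hB_def]
        congr 1
        ring
      calc _ ≤ _ := h1
        _ ≤ _ := h2
        _ = B := h3
    rw [ENNReal.le_ofReal_iff_toReal_le (measure_ne_top μ _) hB0]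
    exact le_trans hch hcB
  -- product computation
  have hprodm : (∏ k : Fin d, (m k : ℝ)) = (n : ℝ) * (H:ℝ)^(2*(d-1)) := by
    have hnat : (∏ k : Fin d, m k) = n * H^(2*(d-1)) := by
      rw [hm_def]
      simp only
      rw [Finset.prod_mul_distrib]
      rw [Fin.prod_univ_eq_prod_range (fun j => dim n H d (j+1)),
        Fin.prod_univ_eq_prod_range (fun j => dim n H d j)]
      rw [xavier_dim_prod1 hd hn, xavier_dim_prod2 hd]
      have hee : 2*(d-1) = (d-1)+(d-1) := by omega
      rw [hee, pow_add]
      ring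
    rw [← Nat.cast_prod, hnat]
    push_cast
    ring
  have hprodε : (∏ k : Fin d, ε k) = (1-t)^d * n * (H:ℝ)^(d-2) := by
    rw [hε_def]
    simp only
    rw [Finset.prod_div_distrib, Finset.prod_mul_distrib, Finset.prod_const, Finset.prod_const,
      Finset.card_univ, Fintype.card_fin, hprodm]
    rw [show 2*(d-1) = (d-2) + d by omega, pow_add]
    field_simp
  -- good sets
  set good : Fin d → Set Ω := fun k => {ω | ε k ≤ frobSq ((Z ω).W k)} with hgood_def
  have htarget : (⋂ k, good k) ⊆ {ω | (1 - t) ^ d * n * (H : ℝ) ^ (d - 2) ≤ ∏ k, frobSq ((Z ω).W k)} := by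
    intro ω hω
    simp only [Set.mem_iInter, hgood_def, Set.mem_setOf_eq] at hω
    show (1 - t) ^ d * n * (H : ℝ) ^ (d - 2) ≤ ∏ k, frobSq ((Z ω).W k)
    rw [← hprodε]
    exact Finset.prod_le_prod (fun k _ => hε0 k) (fun k _ => hω k)
  refine le_trans ?_ (measure_mono htarget)
  -- union bound
  have hcompl : ∀ k, (good k)ᶜ = {ω | frobSq ((Z ω).W k) < ε k} := by
    intro k
    ext ω
    simp [hgood_def, not_le]
  have hUB : μ (⋃ k, (good k)ᶜ) ≤ ENNReal.ofReal ((d:ℝ) * B) := by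
    refine le_trans (measure_iUnion_fintype_le _ _) ?_
    calc (∑ k : Fin d, μ ((good k)ᶜ)) ≤ ∑ _k : Fin d, ENNReal.ofReal B := by
          refine Finset.sum_le_sum fun k _ => ?_
          rw [hcompl k]; exact hbad k
      _ = (d : ℝ≥0∞) * ENNReal.ofReal B := by
          rw [Finset.sum_const, Finset.card_univ, Fintype.card_fin, nsmul_eq_mul]
      _ = ENNReal.ofReal ((d:ℝ) * B) := by
          rw [ENNReal.ofReal_mul (by positivity), ENNReal.ofReal_natCast]
  have hone : (1 : ℝ≥0∞) ≤ μ (⋂ k, good k) + ENNReal.ofReal ((d:ℝ) * B) := by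
    have huniv : (Set.univ : Set Ω) = (⋂ k, good k) ∪ (⋃ k, (good k)ᶜ) := by
      rw [← Set.compl_iInter, Set.union_compl_self]
    calc (1 : ℝ≥0∞) = μ Set.univ := (measure_univ).symm
      _ = μ ((⋂ k, good k) ∪ (⋃ k, (good k)ᶜ)) := by rw [← huniv]
      _ ≤ μ (⋂ k, good k) + μ (⋃ k, (good k)ᶜ) := measure_union_le _ _
      _ ≤ μ (⋂ k, good k) + ENNReal.ofReal ((d:ℝ) * B) := by
          exact add_le_add_right hUB _
  calc ENNReal.ofReal (1 - 2 * d * Real.exp (-((H : ℝ) * t ^ 2) / 8))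
      ≤ ENNReal.ofReal (1 - (d:ℝ) * B) := by
        refine ENNReal.ofReal_le_ofReal ?_
        rw [hB_def]
        have : (0:ℝ) ≤ (d:ℝ) * Real.exp (-((H:ℝ) * t^2) / 8) := by positivity
        nlinarith
    _ = 1 - ENNReal.ofReal ((d:ℝ) * B) := by
        rw [ENNReal.ofReal_sub _ (by positivity), ENNReal.ofReal_one]
    _ ≤ μ (⋂ k, good k) := by
        rw [tsub_le_iff_right]
        exact hone
end
end
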